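/- For every positive integer n, the sum over 4-tuples (a,b,c,d) with 1 ≤ a < b ≤ n+1 and 1 ≤ d ≤ c ≤ n of q^{(n-a)+(n+1-b)+(n-c)+(n-d)} equals the square of the q-binomial coefficient [n+1 choose 2]_q. -/

import Mathlib

/-- The field of rational functions in q over ℚ. -/
noncomputable def q : RatFunc ℚ := RatFunc.X

/-- The q-analogue [m]_q = 1 + q + ... + q^{m-1}. -/
noncomputable def qa (m : ℕ) : RatFunc ℚ := ∑ j ∈ Finset.range m, q ^ j

/-- The triangular double sum `T n = ∑_{j<n} ∑_{i≤j} q^{i+j}`. -/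
noncomputable def Tq (n : ℕ) : RatFunc ℚ :=
  ∑ j ∈ Finset.range n, ∑ i ∈ Finset.range (j + 1), q ^ (i + j)

lemma one_add_q_ne_zero : (1 + q : RatFunc ℚ) ≠ 0 := by
  have h : (1 + q : RatFunc ℚ) =
      algebraMap (Polynomial ℚ) (RatFunc ℚ) (1 + Polynomial.X) := by
    rw [q, map_add, map_one, RatFunc.algebraMap_X]
  rw [h]
  apply RatFunc.algebraMap_ne_zero
  intro hc
  have := congrArg (Polynomial.eval 0) hc
  simp at this

lemma key (n : ℕ) : (1 + q) * Tq n = qa (n + 1) * qa n := by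
  induction n with
  | zero => simp [Tq, qa]
  | succ n ih =>
    have h3 : ∑ i ∈ Finset.range (n + 1), q ^ (i + n) = q ^ n * qa (n + 1) := by
      rw [qa, Finset.mul_sum]
      exact Finset.sum_congr rfl fun i _ => by rw [pow_add]; ring
    rw [Tq, Finset.sum_range_succ, ← Tq, mul_add, ih, h3]
    have h1 : qa (n + 2) = qa (n + 1) + q ^ (n + 1) := by
      rw [qa, qa, Finset.sum_range_succ]
    have h2 : qa (n + 1) = qa n + q ^ n := by
      rw [qa, qa, Finset.sum_range_succ]
    rw [h1]
    nth_rewrite 3 [h2]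
    ring

lemma Tq_eq (n : ℕ) : Tq n = qa (n + 1) * qa n / (1 + q) := by
  rw [eq_div_iff one_add_q_ne_zero, mul_comm, key]

lemma S1_eq (n : ℕ) :
    (∑ a ∈ Finset.Icc 1 (n + 1), ∑ b ∈ Finset.Icc 1 (n + 1),
      if a < b then q ^ ((n - a) + (n + 1 - b)) else 0) = Tq n := by
  rw [← Finset.sum_product']
  rw [← Finset.sum_filter]
  rw [Tq, Finset.sum_sigma']
  refine Finset.sum_nbij' (fun p => ⟨n - p.1, n + 1 - p.2⟩)
    (fun s => (n - s.1, n + 1 - s.2)) ?_ ?_ ?_ ?_ ?_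
  · intro p hp
    simp only [Finset.mem_filter, Finset.mem_product, Finset.mem_Icc] at hp
    simp only [Finset.mem_sigma, Finset.mem_range]
    omega
  · intro s hs
    simp only [Finset.mem_sigma, Finset.mem_range] at hs
    simp only [Finset.mem_filter, Finset.mem_product, Finset.mem_Icc]
    omega
  · rintro ⟨a, b⟩ hp
    simp only [Finset.mem_filter, Finset.mem_product, Finset.mem_Icc] at hp
    simp only [Prod.mk.injEq]
    constructor <;> omega
  · rintro ⟨j, i⟩ hs
    simp only [Finset.mem_sigma, Finset.mem_range] at hs
    have h1 : n - (n - j) = j := by omega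
    have h2 : n + 1 - (n + 1 - i) = i := by omega
    dsimp only
    rw [h1, h2]
  · intro p hp
    simp only
    rw [add_comm (n - p.1)]
  -- note: the sigma second component is ⟨j, i⟩ ↦ q^(i+j); but our map sends i-slot = n+1-p.2
lemma S2_eq (n : ℕ) :
    (∑ c ∈ Finset.Icc 1 n, ∑ d ∈ Finset.Icc 1 n,
      if d ≤ c then q ^ ((n - c) + (n - d)) else 0) = Tq n := by
  rw [← Finset.sum_product']
  rw [← Finset.sum_filter]
  rw [Tq, Finset.sum_sigma']
  refine Finset.sum_nbij' (fun p => ⟨n - p.2, n - p.1⟩)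
    (fun s => (n - s.2, n - s.1)) ?_ ?_ ?_ ?_ ?_
  · intro p hp
    simp only [Finset.mem_filter, Finset.mem_product, Finset.mem_Icc] at hp
    simp only [Finset.mem_sigma, Finset.mem_range]
    omega
  · intro s hs
    simp only [Finset.mem_sigma, Finset.mem_range] at hs
    simp only [Finset.mem_filter, Finset.mem_product, Finset.mem_Icc]
    omega
  · rintro ⟨a, b⟩ hp
    simp only [Finset.mem_filter, Finset.mem_product, Finset.mem_Icc] at hp
    simp only [Prod.mk.injEq]
    constructor <;> omega
  · rintro ⟨j, i⟩ hs
    simp only [Finset.mem_sigma, Finset.mem_range] at hs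
    have h1 : n - (n - j) = j := by omega
    have h2 : n - (n - i) = i := by omega
    dsimp only
    rw [h1, h2]
  · intro p hp
    simp only

theorem taxicab_qcount_duoprism_far (n : ℕ) (hn : 0 < n) :
    (∑ p ∈ (Finset.Icc 1 (n + 1) ×ˢ Finset.Icc 1 (n + 1) ×ˢ
              Finset.Icc 1 n ×ˢ Finset.Icc 1 n).filter
        (fun p : ℕ × ℕ × ℕ × ℕ => p.1 < p.2.1 ∧ p.2.2.2 ≤ p.2.2.1),
        q ^ ((n - p.1) + (n + 1 - p.2.1) + (n - p.2.2.1) + (n - p.2.2.2)))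
      = (qa (n + 1) * qa n / (1 + q)) ^ 2 := by
  rw [← Tq_eq, sq]
  rw [Finset.sum_filter]
  simp only [Finset.sum_product]
  nth_rewrite 1 [← S1_eq n]
  rw [← S2_eq n]
  rw [Finset.sum_mul]
  refine Finset.sum_congr rfl fun a _ => ?_
  rw [Finset.sum_mul]
  refine Finset.sum_congr rfl fun b _ => ?_
  rw [Finset.mul_sum]
  refine Finset.sum_congr rfl fun c _ => ?_
  rw [Finset.mul_sum]
  refine Finset.sum_congr rfl fun d _ => ?_
  by_cases h1 : a < b <;> by_cases h2 : d ≤ c <;>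
    simp [h1, h2, pow_add, mul_assoc]
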